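/- Let V be a finite-dimensional real vector space, let α be a nonzero linear functional on V, and let ω be an alternating k-form on V (k ≥ 1) such that the wedge product α ∧ ω = 0. Then there exists an alternating (k−1)-form ψ on V such that ω = α ∧ ψ. -/
import Mathlib


open scoped TensorProduct

open Equiv AlternatingMap

/-- The wedge (exterior) product of a linear functional `α` (viewed as an alternating
1-form) with an alternating `k`-form `ψ`, yielding an alternating `(k+1)`-form. -/
noncomputable def wedge1 {V : Type*} [AddCommGroup V] [Module ℝ V] {k : ℕ}
    (α : V →ₗ[ℝ] ℝ) (ψ : V [⋀^Fin k]→ₗ[ℝ] ℝ) : V [⋀^Fin (k + 1)]→ₗ[ℝ] ℝ :=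
  (((TensorProduct.lid ℝ ℝ).toLinearMap.compAlternatingMap
      (((AlternatingMap.ofSubsingleton ℝ V ℝ (0 : Fin 1)) α).domCoprod ψ))).domDomCongr
    (finSumFinEquiv.trans (finCongr (Nat.add_comm 1 k)))

/-- A permutation of `Fin 1 ⊕ Fin k` fixing `Sum.inl 0` is in the range of `sumCongrHom`. -/
lemma fix_inl_mem_range {k : ℕ} (π : Equiv.Perm (Fin 1 ⊕ Fin k))
    (hπ : π (Sum.inl 0) = Sum.inl 0) :
    π ∈ (Equiv.Perm.sumCongrHom (Fin 1) (Fin k)).range := by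
  have hinr : ∀ (ρ : Equiv.Perm (Fin 1 ⊕ Fin k)), ρ (Sum.inl 0) = Sum.inl 0 →
      ∀ j : Fin k, ρ (Sum.inr j) = Sum.inr (Sum.elim (fun _ => j) id (ρ (Sum.inr j))) := by
    intro ρ hρ j
    rcases hh : ρ (Sum.inr j) with x | y
    · exfalso
      have hx : x = 0 := Subsingleton.elim _ _
      rw [hx] at hh
      exact absurd (ρ.injective (hh.trans hρ.symm)) (by simp)
    · simp
  have hπ' : π.symm (Sum.inl 0) = Sum.inl 0 :=
    π.injective (by rw [Equiv.apply_symm_apply, hπ])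
  set f : Fin k → Fin k := fun j => Sum.elim (fun _ => j) id (π (Sum.inr j)) with hf
  set g : Fin k → Fin k := fun j => Sum.elim (fun _ => j) id (π.symm (Sum.inr j)) with hg
  have hfe : ∀ j, π (Sum.inr j) = Sum.inr (f j) := hinr π hπ
  have hge : ∀ j, π.symm (Sum.inr j) = Sum.inr (g j) := hinr π.symm hπ'
  have hgf : ∀ j, g (f j) = j := by
    intro j
    have := hge (f j)
    rw [← hfe j, Equiv.symm_apply_apply] at this
    exact (Sum.inr.inj this).symm
  have hfg : ∀ j, f (g j) = j := by
    intro j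
    have := hfe (g j)
    rw [← hge j, Equiv.apply_symm_apply] at this
    exact (Sum.inr.inj this).symm
  refine ⟨(1, ⟨f, g, hgf, hfg⟩), ?_⟩
  ext x
  rcases x with a | j
  · have : a = 0 := Subsingleton.elim _ _
    subst this
    simpa using hπ.symm
  · simpa using (hfe j).symm

lemma wedge1_apply {V : Type*} [AddCommGroup V] [Module ℝ V] {k : ℕ}
    (α : V →ₗ[ℝ] ℝ) (ψ : V [⋀^Fin k]→ₗ[ℝ] ℝ) (v : Fin (k + 1) → V) :
    wedge1 α ψ v =
      ∑ i : Fin (k + 1), ((-1 : ℝ) ^ (i : ℕ)) •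
        (α (v i) * ψ (fun j => v (i.succAbove j))) := by
  classical
  set e : (Fin 1 ⊕ Fin k) ≃ Fin (k + 1) :=
    finSumFinEquiv.trans (finCongr (Nat.add_comm 1 k)) with he
  have he_inl : e (Sum.inl 0) = 0 := by
    apply Fin.ext
    simp [he, finSumFinEquiv]
  have he_inr : ∀ j : Fin k, e (Sum.inr j) = j.succ := by
    intro j
    apply Fin.ext
    simp [he, finSumFinEquiv, Nat.add_comm]
  -- the representative permutations
  set τ : Fin (k + 1) → Equiv.Perm (Fin 1 ⊕ Fin k) :=
    fun i => Equiv.permCongr e.symm (Fin.cycleRange i)⁻¹ with hτ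
  have hτ_inl : ∀ i, τ i (Sum.inl 0) = e.symm i := by
    intro i
    simp only [hτ, Equiv.permCongr_apply, Equiv.symm_symm, he_inl]
    rw [show ((Fin.cycleRange i)⁻¹ : Equiv.Perm (Fin (k+1))) (0 : Fin (k+1))
      = (Fin.cycleRange i).symm 0 from rfl, Fin.cycleRange_symm_zero]
  have hτ_inr : ∀ i (j : Fin k), τ i (Sum.inr j) = e.symm (i.succAbove j) := by
    intro i j
    simp only [hτ, Equiv.permCongr_apply, Equiv.symm_symm, he_inr]
    rw [show ((Fin.cycleRange i)⁻¹ : Equiv.Perm (Fin (k+1))) (j.succ)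
      = (Fin.cycleRange i).symm j.succ from rfl, Fin.cycleRange_symm_succ]
  set q : Fin (k + 1) → Equiv.Perm.ModSumCongr (Fin 1) (Fin k) :=
    fun i => Quotient.mk'' (τ i) with hq
  have hq_bij : Function.Bijective q := by
    constructor
    · intro i i' hii
      have := Quotient.exact' hii
      rw [QuotientGroup.leftRel_apply] at this
      obtain ⟨⟨sl, sr⟩, hs⟩ := this
      have h2 : τ i' = τ i * Equiv.Perm.sumCongrHom _ _ (sl, sr) := by
        rw [hs]; group
      have := congrArg (fun p => p (Sum.inl 0)) h2
      simp only [Equiv.Perm.mul_apply, Equiv.Perm.sumCongrHom_apply,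
        Equiv.sumCongr_apply, Sum.map_inl] at this
      rw [Subsingleton.elim (sl 0) 0, hτ_inl, hτ_inl] at this
      exact e.symm.injective this.symm
    · intro σ
      refine Quotient.inductionOn' σ fun π => ?_
      refine ⟨e (π (Sum.inl 0)), Quotient.sound' ?_⟩
      rw [QuotientGroup.leftRel_apply]
      apply fix_inl_mem_range
      simp only [Equiv.Perm.mul_apply]
      rw [show ((τ (e (π (Sum.inl 0))))⁻¹ : Equiv.Perm (Fin 1 ⊕ Fin k))
        = (τ (e (π (Sum.inl 0)))).symm from rfl]
      rw [Equiv.symm_apply_eq, hτ_inl, Equiv.symm_apply_apply]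
  have hsign : ∀ i, Equiv.Perm.sign (τ i) = (-1 : ℤˣ) ^ (i : ℕ) := by
    intro i
    simp [hτ, Equiv.Perm.sign_permCongr, Fin.sign_cycleRange]
  -- now compute
  rw [show wedge1 α ψ v
      = (TensorProduct.lid ℝ ℝ).toLinearMap
          ((((AlternatingMap.ofSubsingleton ℝ V ℝ (0 : Fin 1)) α).domCoprod ψ)
            (fun x => v (e x))) from rfl]
  rw [AlternatingMap.domCoprod_apply]
  rw [MultilinearMap.sum_apply]
  rw [← Fintype.sum_bijective q hq_bij _ _ (fun i => rfl)]
  rw [map_sum]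
  refine Finset.sum_congr rfl fun i _ => ?_
  rw [hq, AlternatingMap.domCoprod.summand_mk'']
  simp only [MultilinearMap.smul_apply, MultilinearMap.domDomCongr_apply,
    MultilinearMap.domCoprod_apply, AlternatingMap.coe_multilinearMap]
  have harg1 : (fun x : Fin 1 => v (e (τ i (Sum.inl x)))) = fun _ => v i := by
    funext x
    rw [Subsingleton.elim x 0, hτ_inl, Equiv.apply_symm_apply]
  have harg2 : (fun j : Fin k => v (e (τ i (Sum.inr j)))) = fun j => v (i.succAbove j) := by
    funext j
    rw [hτ_inr, Equiv.apply_symm_apply]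
  rw [harg1, harg2, hsign i, Units.smul_def, map_zsmul]
  simp only [LinearEquiv.coe_coe, TensorProduct.lid_tmul,
    AlternatingMap.ofSubsingleton_apply_apply]
  rw [zsmul_eq_mul]
  push_cast
  simp [smul_eq_mul]


/-- If `α` is a nonzero linear functional on a finite-dimensional real vector space `V`
and `ω` is an alternating `k`-form (`k ≥ 1`, here `k = m + 1`) with `α ∧ ω = 0`, then
`ω = α ∧ ψ` for some alternating `(k-1)`-form `ψ`. -/
theorem statement0 {V : Type*} [AddCommGroup V] [Module ℝ V] [FiniteDimensional ℝ V]
    {m : ℕ} (α : V →ₗ[ℝ] ℝ) (hα : α ≠ 0) (ω : V [⋀^Fin (m + 1)]→ₗ[ℝ] ℝ)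
    (h : wedge1 α ω = 0) :
    ∃ ψ : V [⋀^Fin m]→ₗ[ℝ] ℝ, ω = wedge1 α ψ := by
  obtain ⟨x, hx⟩ : ∃ x, α x ≠ 0 := by
    by_contra hc
    push_neg at hc
    exact hα (LinearMap.ext fun y => by simpa using hc y)
  set e' : V := (α x)⁻¹ • x with he'
  have hαe' : α e' = 1 := by
    simp [he', inv_mul_cancel₀ hx]
  set ψ : V [⋀^Fin m]→ₗ[ℝ] ℝ := ω.curryLeft e' with hψ
  have hψa : ∀ w : Fin m → V, ω (Fin.cons e' w) = ψ w := fun w => rfl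
  refine ⟨ψ, ?_⟩
  ext v
  have h0 := congrArg (fun f : V [⋀^Fin (m + 2)]→ₗ[ℝ] ℝ => f (Fin.cons e' v)) h
  simp only [AlternatingMap.zero_apply] at h0
  rw [wedge1_apply, Fin.sum_univ_succ] at h0
  have key : ∀ i' : Fin (m + 1),
      (fun j => (Fin.cons e' v : Fin (m + 2) → V) (Fin.succAbove i'.succ j))
        = (Fin.cons e' (fun j => v (i'.succAbove j)) : Fin (m + 1) → V) := by
    intro i'
    funext j
    rcases Fin.eq_zero_or_eq_succ j with hj | ⟨j', rfl⟩
    · subst hj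
      simp
    · simp [Fin.succ_succAbove_succ]
  have hterm0 : ((-1 : ℝ) ^ ((0 : Fin (m + 2)) : ℕ)) •
      (α ((Fin.cons e' v : Fin (m + 2) → V) 0) *
        ω (fun j => (Fin.cons e' v : Fin (m + 2) → V) (Fin.succAbove 0 j))) = ω v := by
    have : (fun j => (Fin.cons e' v : Fin (m + 2) → V) (Fin.succAbove (0 : Fin (m + 2)) j)) = v := by
      funext j
      simp [Fin.succAbove]
    rw [this]
    simp [hαe']
  rw [hterm0] at h0
  have hrest : ∑ i : Fin (m + 1), ((-1 : ℝ) ^ ((i.succ : Fin (m + 2)) : ℕ)) •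
        (α ((Fin.cons e' v : Fin (m + 2) → V) i.succ) *
          ω (fun j => (Fin.cons e' v : Fin (m + 2) → V) (Fin.succAbove i.succ j)))
      = -∑ i : Fin (m + 1), ((-1 : ℝ) ^ (i : ℕ)) •
        (α (v i) * ψ (fun j => v (i.succAbove j))) := by
    rw [← Finset.sum_neg_distrib]
    refine Finset.sum_congr rfl fun i _ => ?_
    rw [key i, hψa, Fin.cons_succ]
    simp only [Fin.val_succ, pow_succ, smul_eq_mul]
    ring
  rw [hrest] at h0
  rw [wedge1_apply]
  linarith
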